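/- Let p > 3 be a prime and let G = Φ₃₄(321)ₐ be the group of order p⁶ with presentation on generators α, α₁, α₂, β₁, β₂, γ and relations [α₁,α] = β₁, [α₂,α] = β₂, [β₂,α] = γ, [α₁,β₁] = γ, αᵖ = β₁, β₁ᵖ = γ, α₁ᵖ = β₂, α₂ᵖ = β₂ᵖ = γᵖ = 1, with every commutator of a pair of generators not listed among these relations declared trivial. Then the Bogomolov multiplier B₀(G) is trivial. -/

import Mathlib

/-!
Φ₃₄(321)ₐ: relations [α₁,α]=β₁, [α₂,α]=β₂, [β₂,α]=γ, [α₁,β₁]=γ, αᵖ=β₁, β₁ᵖ=γ,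
α₁ᵖ=β₂, α₂ᵖ=β₂ᵖ=γᵖ=1.
-/

namespace Stmt10

/-- The additive group `ℚ/ℤ`. -/
abbrev QZ : Type := ℚ ⧸ AddSubgroup.zmultiples (1 : ℚ)

/-- An inhomogeneous 2-cocycle on `G` with values in `ℚ/ℤ` (trivial `G`-action). -/
def IsTwoCocycle {G : Type} [Group G] (f : G → G → QZ) : Prop :=
  ∀ g h j : G, f h j - f (g * h) j + f g (h * j) - f g h = 0

/-- An inhomogeneous 2-coboundary on `G` with values in `ℚ/ℤ` (trivial `G`-action). -/
def IsTwoCoboundary {G : Type} [Group G] (f : G → G → QZ) : Prop :=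
  ∃ c : G → QZ, ∀ g h : G, f g h = c h - c (g * h) + c g

/-- A subgroup is bicyclic if it is abelian and generated by at most two elements
(equivalently, cyclic or a direct product of two cyclic groups). -/
def IsBicyclic {G : Type} [Group G] (A : Subgroup G) : Prop :=
  (∀ x y : A, x * y = y * x) ∧ ∃ a b : G, A = Subgroup.closure {a, b}

/-- The Bogomolov multiplier `B₀(G) ⊆ H²(G, ℚ/ℤ)` is trivial, phrased at the level of
2-cocycles: every 2-cocycle whose restriction to each bicyclic subgroup is a coboundary
(i.e. whose class restricts to zero on each bicyclic subgroup) is itself a coboundary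
(i.e. its class is zero). -/
def BogomolovMultiplierIsTrivial (G : Type) [Group G] : Prop :=
  ∀ f : G → G → QZ, IsTwoCocycle f →
    (∀ A : Subgroup G, IsBicyclic A → IsTwoCoboundary (fun a b : ↥A => f ↑a ↑b)) →
    IsTwoCoboundary f

/-- The Bogomolov multiplier `B₀(G) ⊆ H²(G, ℚ/ℤ)` is nontrivial, phrased at the level of
2-cocycles. -/
def BogomolovMultiplierIsNontrivial (G : Type) [Group G] : Prop :=
  ∃ f : G → G → QZ, IsTwoCocycle f ∧
    (∀ A : Subgroup G, IsBicyclic A → IsTwoCoboundary (fun a b : ↥A => f ↑a ↑b)) ∧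
    ¬ IsTwoCoboundary f

/-- The generators. -/
inductive Gen | a | a1 | a2 | b1 | b2 | g

open FreeGroup

/-- The commutator `[x,y] = x⁻¹y⁻¹xy`. -/
def c (x y : FreeGroup Gen) : FreeGroup Gen := x⁻¹ * y⁻¹ * x * y

/-- The defining relators. -/
def rels (p : ℕ) : Set (FreeGroup Gen) :=
  { c (of .a1) (of .a) * (of Gen.b1)⁻¹,
    c (of .a2) (of .a) * (of Gen.b2)⁻¹,
    c (of .b2) (of .a) * (of Gen.g)⁻¹,
    c (of .a1) (of .b1) * (of Gen.g)⁻¹,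
    c (of .a) (of .b1),
    c (of .a) (of .g),
    c (of .a1) (of .a2),
    c (of .a1) (of .b2),
    c (of .a1) (of .g),
    c (of .a2) (of .b1),
    c (of .a2) (of .b2),
    c (of .a2) (of .g),
    c (of .b1) (of .b2),
    c (of .b1) (of .g),
    c (of .b2) (of .g),
    (of Gen.a) ^ p * (of Gen.b1)⁻¹,
    (of Gen.b1) ^ p * (of Gen.g)⁻¹,
    (of Gen.a1) ^ p * (of Gen.b2)⁻¹,
    (of Gen.a2) ^ p,
    (of Gen.b2) ^ p,
    (of Gen.g) ^ p }

/-- Auxiliary lemmas inserted above the theorem. -/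

lemma qz_divisible (n : ℕ) (hn : 0 < n) (z : QZ) : ∃ w : QZ, n • w = z := by
  obtain ⟨q, rfl⟩ := QuotientAddGroup.mk_surjective z
  refine ⟨QuotientAddGroup.mk (q / n), ?_⟩
  rw [← QuotientAddGroup.mk_nsmul]
  congr 1
  have hn' : (n : ℚ) ≠ 0 := by positivity
  rw [nsmul_eq_mul, mul_div_assoc', mul_div_cancel_left₀ q hn']

lemma cocycle_one_left {G : Type} [Group G] {f : G → G → QZ} (hf : IsTwoCocycle f) (g : G) :
    f 1 g = f 1 1 := by
  have h := hf 1 1 g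
  simp only [one_mul] at h
  refine sub_eq_zero.mp ?_
  calc f 1 g - f 1 1 = f 1 g - f 1 g + f 1 g - f 1 1 := by abel
  _ = 0 := h

lemma cocycle_one_right {G : Type} [Group G] {f : G → G → QZ} (hf : IsTwoCocycle f) (g : G) :
    f g 1 = f 1 1 := by
  have h := hf g 1 1
  simp only [mul_one, one_mul] at h
  refine sub_eq_zero.mp ?_
  calc f g 1 - f 1 1 = -(f 1 1 - f g 1 + f g 1 - f g 1) := by abel
  _ = 0 := by rw [h, neg_zero]

/-- The twisted product group structure on `QZ × G` given by a 2-cocycle. -/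
def egroup {G : Type} [Group G] (f : G → G → QZ) (hf : IsTwoCocycle f) : Group (QZ × G) where
  mul x y := (x.1 + y.1 + f x.2 y.2, x.2 * y.2)
  one := (-(f 1 1), 1)
  inv x := (-x.1 - f x.2⁻¹ x.2 - f 1 1, x.2⁻¹)
  mul_assoc x y z := by
    have h := hf x.2 y.2 z.2
    refine Prod.ext ?_ (mul_assoc _ _ _)
    show x.1 + y.1 + f x.2 y.2 + z.1 + f (x.2 * y.2) z.2
      = x.1 + (y.1 + z.1 + f y.2 z.2) + f x.2 (y.2 * z.2)
    refine sub_eq_zero.mp ?_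
    calc x.1 + y.1 + f x.2 y.2 + z.1 + f (x.2 * y.2) z.2
        - (x.1 + (y.1 + z.1 + f y.2 z.2) + f x.2 (y.2 * z.2))
        = -(f y.2 z.2 - f (x.2 * y.2) z.2 + f x.2 (y.2 * z.2) - f x.2 y.2) := by abel
    _ = 0 := by rw [h, neg_zero]
  one_mul x := by
    refine Prod.ext ?_ (one_mul _)
    show -(f 1 1) + x.1 + f 1 x.2 = x.1
    rw [cocycle_one_left hf x.2]
    abel
  mul_one x := by
    refine Prod.ext ?_ (mul_one _)
    show x.1 + -(f 1 1) + f x.2 1 = x.1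
    rw [cocycle_one_right hf x.2]
    abel
  inv_mul_cancel x := by
    refine Prod.ext ?_ (inv_mul_cancel _)
    show -x.1 - f x.2⁻¹ x.2 - f 1 1 + x.1 + f x.2⁻¹ x.2 = -(f 1 1)
    abel

lemma conj_transport {H : Type} [Group H] {a x b : H} (h : a⁻¹ * x * a = x * b)
    (hc : Commute a b) : ∀ k : ℕ, (a ^ k)⁻¹ * x * a ^ k = x * b ^ k := by
  intro k; induction k with
  | zero => simp
  | succ k ih =>
    have e1 : (a ^ (k + 1))⁻¹ * x * a ^ (k + 1) = a⁻¹ * ((a ^ k)⁻¹ * x * a ^ k) * a := by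
      rw [pow_succ]; group
    have e3 : a⁻¹ * b ^ k * a = b ^ k := by
      rw [mul_assoc, ← (hc.pow_right k).eq, inv_mul_cancel_left]
    rw [e1, ih]
    calc a⁻¹ * (x * b ^ k) * a = (a⁻¹ * x * a) * (a⁻¹ * b ^ k * a) := by group
    _ = (x * b) * b ^ k := by rw [e3, h]
    _ = x * b ^ (k + 1) := by rw [pow_succ']; group

lemma prod_pow_comm {H : Type} [Group H] {x y u : H} (h : y * x = x * y * u)
    (hux : Commute x u) (huy : Commute y u) :
    ∀ n : ℕ, (x * y) ^ n = x ^ n * y ^ n * u ^ (n.choose 2) := by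
  have hyn : ∀ n : ℕ, y ^ n * x = x * y ^ n * u ^ n := by
    intro n; induction n with
    | zero => simp
    | succ n ih =>
      calc y ^ (n + 1) * x = y * (y ^ n * x) := by rw [pow_succ']; group
      _ = y * (x * y ^ n * u ^ n) := by rw [ih]
      _ = (y * x) * y ^ n * u ^ n := by group
      _ = (x * y * u) * y ^ n * u ^ n := by rw [h]
      _ = x * y * (u * y ^ n) * u ^ n := by group
      _ = x * y * (y ^ n * u) * u ^ n := by rw [← (huy.pow_left n).eq]
      _ = x * y ^ (n + 1) * u ^ (n + 1) := by rw [pow_succ', pow_succ' u]; group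
  intro n; induction n with
  | zero => simp
  | succ n ih =>
    have hc2 : (n + 1).choose 2 = n + n.choose 2 := by
      have h0 : (n + 1).choose 2 = n.choose 1 + n.choose 2 := Nat.choose_succ_succ n 1
      have h1 : n.choose 1 = n := Nat.choose_one_right n
      omega
    calc (x * y) ^ (n + 1) = (x * y) ^ n * (x * y) := pow_succ _ _
    _ = (x ^ n * y ^ n * u ^ (n.choose 2)) * (x * y) := by rw [ih]
    _ = x ^ n * y ^ n * (u ^ (n.choose 2) * x) * y := by group
    _ = x ^ n * y ^ n * (x * u ^ (n.choose 2)) * y := by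
        rw [← (hux.pow_right (n.choose 2)).eq]
    _ = x ^ n * (y ^ n * x) * (u ^ (n.choose 2) * y) := by group
    _ = x ^ n * (x * y ^ n * u ^ n) * (u ^ (n.choose 2) * y) := by rw [hyn n]
    _ = x ^ n * (x * y ^ n * u ^ n) * (y * u ^ (n.choose 2)) := by
        rw [← (huy.pow_right (n.choose 2)).eq]
    _ = x ^ (n + 1) * y ^ n * (u ^ n * y) * u ^ (n.choose 2) := by rw [pow_succ]; group
    _ = x ^ (n + 1) * y ^ n * (y * u ^ n) * u ^ (n.choose 2) := by
        rw [← (huy.pow_right n).eq]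
    _ = x ^ (n + 1) * y ^ (n + 1) * u ^ (n + n.choose 2) := by
        rw [pow_succ y, pow_add]; group
    _ = x ^ (n + 1) * y ^ (n + 1) * u ^ ((n + 1).choose 2) := by rw [hc2]

set_option maxHeartbeats 1000000 in
theorem bogomolov_trivial_Phi34 (p : ℕ) (hp : p.Prime) (h3 : 3 < p)
    (hcard : Nat.card (PresentedGroup (rels p)) = p ^ 6) :
    BogomolovMultiplierIsTrivial (PresentedGroup (rels p)) := by
  intro f hf hbi
  letI : Group (QZ × PresentedGroup (rels p)) := egroup f hf
  have hp0 : 0 < p := by omega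
  -- basic computation rules in the extension
  have hmul : ∀ x y : QZ × PresentedGroup (rels p),
      x * y = (x.1 + y.1 + f x.2 y.2, x.2 * y.2) := fun _ _ => rfl
  have hsnd_mul : ∀ x y : QZ × PresentedGroup (rels p), (x * y).2 = x.2 * y.2 :=
    fun _ _ => rfl
  have hsnd_inv : ∀ x : QZ × PresentedGroup (rels p), (x⁻¹).2 = x.2⁻¹ := fun _ => rfl
  have hone : (1 : QZ × PresentedGroup (rels p)) = (-(f 1 1), 1) := rfl
  have hsnd_pow : ∀ (x : QZ × PresentedGroup (rels p)) (n : ℕ), (x ^ n).2 = x.2 ^ n := by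
    intro x n
    induction n with
    | zero => rw [pow_zero, pow_zero]; rfl
    | succ n ih => rw [pow_succ, pow_succ, hsnd_mul, ih]
  -- the central copy of QZ
  set Z : QZ → QZ × PresentedGroup (rels p) := fun t => (t - f 1 1, 1) with hZdef
  have hZ_snd : ∀ t, (Z t).2 = 1 := fun _ => rfl
  have hZ_mul : ∀ t (x : QZ × PresentedGroup (rels p)), Z t * x = (t + x.1, x.2) := by
    intro t x
    rw [hmul]
    refine Prod.ext ?_ (one_mul _)
    show t - f 1 1 + x.1 + f 1 x.2 = t + x.1
    rw [cocycle_one_left hf x.2]; abel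
  have hmul_Z : ∀ t (x : QZ × PresentedGroup (rels p)), x * Z t = (t + x.1, x.2) := by
    intro t x
    rw [hmul]
    refine Prod.ext ?_ (mul_one _)
    show x.1 + (t - f 1 1) + f x.2 1 = t + x.1
    rw [cocycle_one_right hf x.2]; abel
  have hZc : ∀ t (x : QZ × PresentedGroup (rels p)), Commute (Z t) x := by
    intro t x
    show Z t * x = x * Z t
    rw [hZ_mul, hmul_Z]
  have hZ_add : ∀ s t, Z s * Z t = Z (s + t) := by
    intro s t
    rw [hZ_mul]
    refine Prod.ext ?_ rfl
    show s + (t - f 1 1) = s + t - f 1 1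
    abel
  have hZ_zero : Z 0 = 1 := by
    rw [hone]
    refine Prod.ext ?_ rfl
    show (0 : QZ) - f 1 1 = -(f 1 1)
    abel
  have hZ_pow : ∀ t (n : ℕ), Z t ^ n = Z (n • t) := by
    intro t n
    induction n with
    | zero => rw [pow_zero, zero_smul, hZ_zero]
    | succ n ih => rw [pow_succ, ih, hZ_add, succ_nsmul]
  have hdiff : ∀ x y : QZ × PresentedGroup (rels p), x.2 = y.2 → x = Z (x.1 - y.1) * y := by
    intro x y h
    rw [hZ_mul]
    refine Prod.ext ?_ h
    show x.1 = x.1 - y.1 + y.1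
    abel
  have hone_of : ∀ x : QZ × PresentedGroup (rels p), x.2 = 1 → x = Z (x.1 + f 1 1) := by
    intro x h
    refine Prod.ext ?_ h
    show x.1 = x.1 + f 1 1 - f 1 1
    abel
  have hKinv1 : ∀ t (x y : QZ × PresentedGroup (rels p)),
      (Z t * x)⁻¹ * y⁻¹ * (Z t * x) * y = x⁻¹ * y⁻¹ * x * y := by
    intro t x y
    have h1 : (Z t * x)⁻¹ * y⁻¹ * (Z t * x) * y = x⁻¹ * ((Z t)⁻¹ * y⁻¹ * Z t) * x * y := by
      group
    have h2 : (Z t)⁻¹ * y⁻¹ * Z t = y⁻¹ := by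
      rw [mul_assoc, ← (hZc t y⁻¹).eq, inv_mul_cancel_left]
    rw [h1, h2]
  have hKinv2 : ∀ t (x y : QZ × PresentedGroup (rels p)),
      x⁻¹ * (Z t * y)⁻¹ * x * (Z t * y) = x⁻¹ * y⁻¹ * x * y := by
    intro t x y
    have h1 : x⁻¹ * (Z t * y)⁻¹ * x * (Z t * y) = x⁻¹ * y⁻¹ * ((Z t)⁻¹ * x * Z t) * y := by
      group
    have h2 : (Z t)⁻¹ * x * Z t = x := by
      rw [mul_assoc, ← (hZc t x).eq, inv_mul_cancel_left]
    rw [h1, h2]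
  have hKtoCommT : ∀ x y : PresentedGroup (rels p),
      x⁻¹ * y⁻¹ * x * y = 1 → x * y = y * x := by
    intro x y h
    have h2 : x * y = (y * x) * (x⁻¹ * y⁻¹ * x * y) := by group
    rw [h, mul_one] at h2
    exact h2
  have hCommtoKE : ∀ x y : QZ × PresentedGroup (rels p),
      x * y = y * x → x⁻¹ * y⁻¹ * x * y = 1 := by
    intro x y h
    rw [mul_assoc (x⁻¹ * y⁻¹), h]
    group
  -- the key consequence of the bicyclic hypothesis: commuting pairs have commuting lifts
  have L1 : ∀ x y : PresentedGroup (rels p), x * y = y * x →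
      ∀ a b : QZ × PresentedGroup (rels p), a.2 = x → b.2 = y → a * b = b * a := by
    intro x y hxy a b ha hb
    have hxmem : x ∈ Subgroup.closure {x, y} := Subgroup.subset_closure (by simp)
    have hymem : y ∈ Subgroup.closure {x, y} := Subgroup.subset_closure (by simp)
    have habel : ∀ u v : PresentedGroup (rels p), u ∈ Subgroup.closure {x, y} →
        v ∈ Subgroup.closure {x, y} → u * v = v * u := by
      intro u v hu hv
      induction hu, hv using Subgroup.closure_induction₂ with
      | mem a' b' ha' hb' =>
        simp only [Set.mem_insert_iff, Set.mem_singleton_iff] at ha' hb'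
        rcases ha' with rfl | rfl <;> rcases hb' with rfl | rfl
        · rfl
        · exact hxy
        · exact hxy.symm
        · rfl
      | one_left x' hx' => rw [one_mul, mul_one]
      | one_right x' hx' => rw [one_mul, mul_one]
      | mul_left a' b' c' ha' hb' hc' h1 h2 =>
        have h1' : Commute a' c' := h1
        have h2' : Commute b' c' := h2
        exact h1'.mul_left h2'
      | mul_right a' b' c' ha' hb' hc' h1 h2 =>
        have h1' : Commute c' a' := h1
        have h2' : Commute c' b' := h2
        exact h1'.mul_right h2'
      | inv_left a' b' ha' hb' h1 =>
        have h1' : Commute a' b' := h1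
        exact h1'.inv_left
      | inv_right a' b' ha' hb' h1 =>
        have h1' : Commute a' b' := h1
        exact h1'.inv_right
    have hbic : IsBicyclic (Subgroup.closure {x, y}) := by
      refine ⟨?_, x, y, rfl⟩
      intro u v
      exact Subtype.ext (habel u.1 v.1 u.2 v.2)
    obtain ⟨cc, hcc⟩ := hbi _ hbic
    set s : ↥(Subgroup.closure {x, y}) → QZ × PresentedGroup (rels p) :=
      fun u => (-(cc u), u.1) with hsdef
    have hs : ∀ u v, s u * s v = s (u * v) := by
      intro u v
      rw [hmul]
      refine Prod.ext ?_ rfl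
      show -(cc u) + -(cc v) + f u.1 v.1 = -(cc (u * v))
      have h' : f u.1 v.1 = cc v - cc (u * v) + cc u := hcc u v
      rw [h']; abel
    have hax : a = Z (a.1 - (s ⟨x, hxmem⟩).1) * s ⟨x, hxmem⟩ := hdiff a (s ⟨x, hxmem⟩) ha
    have hby : b = Z (b.1 - (s ⟨y, hymem⟩).1) * s ⟨y, hymem⟩ := hdiff b (s ⟨y, hymem⟩) hb
    have hss : Commute (s ⟨x, hxmem⟩) (s ⟨y, hymem⟩) := by
      show s ⟨x, hxmem⟩ * s ⟨y, hymem⟩ = s ⟨y, hymem⟩ * s ⟨x, hxmem⟩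
      rw [hs, hs]
      exact congrArg s (Subtype.ext hxy)
    rw [hax, hby]
    exact ((hZc _ _).symm).mul_right ((hZc _ _).mul_left hss)
  -- names for the generators
  set α : PresentedGroup (rels p) := PresentedGroup.of Gen.a with hαdef
  set α₁ : PresentedGroup (rels p) := PresentedGroup.of Gen.a1 with hα₁def
  set α₂ : PresentedGroup (rels p) := PresentedGroup.of Gen.a2 with hα₂def
  set β₁ : PresentedGroup (rels p) := PresentedGroup.of Gen.b1 with hβ₁def
  set β₂ : PresentedGroup (rels p) := PresentedGroup.of Gen.b2 with hβ₂def
  set γ : PresentedGroup (rels p) := PresentedGroup.of Gen.g with hγdef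
  -- relations in the presented group
  have hrel : ∀ r ∈ rels p, PresentedGroup.mk (rels p) r = 1 := fun r hr =>
    (QuotientGroup.eq_one_iff r).2 (Subgroup.subset_normalClosure hr)
  have hmk : ∀ x : Gen, PresentedGroup.mk (rels p) (FreeGroup.of x)
      = PresentedGroup.of (rels := rels p) x := fun _ => rfl
  have hg1 : α₁⁻¹ * α⁻¹ * α₁ * α = β₁ := by
    have h := hrel (c (of .a1) (of .a) * (of Gen.b1)⁻¹) (Set.mem_insert _ _)
    simp only [Stmt10.c, _root_.map_mul, _root_.map_inv, hmk] at h
    exact mul_inv_eq_one.mp h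
  have hg2 : α₂⁻¹ * α⁻¹ * α₂ * α = β₂ := by
    have h := hrel (c (of .a2) (of .a) * (of Gen.b2)⁻¹) (Set.mem_insert_of_mem _ (Set.mem_insert _ _))
    simp only [Stmt10.c, _root_.map_mul, _root_.map_inv, hmk] at h
    exact mul_inv_eq_one.mp h
  have hg3 : β₂⁻¹ * α⁻¹ * β₂ * α = γ := by
    have h := hrel (c (of .b2) (of .a) * (of Gen.g)⁻¹) (Set.mem_insert_of_mem _ (Set.mem_insert_of_mem _ (Set.mem_insert _ _)))
    simp only [Stmt10.c, _root_.map_mul, _root_.map_inv, hmk] at h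
    exact mul_inv_eq_one.mp h
  have hg4 : α₁⁻¹ * β₁⁻¹ * α₁ * β₁ = γ := by
    have h := hrel (c (of .a1) (of .b1) * (of Gen.g)⁻¹) (Set.mem_insert_of_mem _ (Set.mem_insert_of_mem _ (Set.mem_insert_of_mem _ (Set.mem_insert _ _))))
    simp only [Stmt10.c, _root_.map_mul, _root_.map_inv, hmk] at h
    exact mul_inv_eq_one.mp h
  have hg5 : α * β₁ = β₁ * α := by
    have h := hrel (c (of .a) (of .b1)) (Set.mem_insert_of_mem _ (Set.mem_insert_of_mem _ (Set.mem_insert_of_mem _ (Set.mem_insert_of_mem _ (Set.mem_insert _ _)))))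
    simp only [Stmt10.c, _root_.map_mul, _root_.map_inv, hmk] at h
    exact hKtoCommT _ _ h
  have hg6 : α * γ = γ * α := by
    have h := hrel (c (of .a) (of .g)) (Set.mem_insert_of_mem _ (Set.mem_insert_of_mem _ (Set.mem_insert_of_mem _ (Set.mem_insert_of_mem _ (Set.mem_insert_of_mem _ (Set.mem_insert _ _))))))
    simp only [Stmt10.c, _root_.map_mul, _root_.map_inv, hmk] at h
    exact hKtoCommT _ _ h
  have hg7 : α₁ * α₂ = α₂ * α₁ := by
    have h := hrel (c (of .a1) (of .a2)) (Set.mem_insert_of_mem _ (Set.mem_insert_of_mem _ (Set.mem_insert_of_mem _ (Set.mem_insert_of_mem _ (Set.mem_insert_of_mem _ (Set.mem_insert_of_mem _ (Set.mem_insert _ _)))))))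
    simp only [Stmt10.c, _root_.map_mul, _root_.map_inv, hmk] at h
    exact hKtoCommT _ _ h
  have hg8 : α₁ * β₂ = β₂ * α₁ := by
    have h := hrel (c (of .a1) (of .b2)) (Set.mem_insert_of_mem _ (Set.mem_insert_of_mem _ (Set.mem_insert_of_mem _ (Set.mem_insert_of_mem _ (Set.mem_insert_of_mem _ (Set.mem_insert_of_mem _ (Set.mem_insert_of_mem _ (Set.mem_insert _ _))))))))
    simp only [Stmt10.c, _root_.map_mul, _root_.map_inv, hmk] at h
    exact hKtoCommT _ _ h
  have hg9 : α₁ * γ = γ * α₁ := by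
    have h := hrel (c (of .a1) (of .g)) (Set.mem_insert_of_mem _ (Set.mem_insert_of_mem _ (Set.mem_insert_of_mem _ (Set.mem_insert_of_mem _ (Set.mem_insert_of_mem _ (Set.mem_insert_of_mem _ (Set.mem_insert_of_mem _ (Set.mem_insert_of_mem _ (Set.mem_insert _ _)))))))))
    simp only [Stmt10.c, _root_.map_mul, _root_.map_inv, hmk] at h
    exact hKtoCommT _ _ h
  have hg10 : α₂ * β₁ = β₁ * α₂ := by
    have h := hrel (c (of .a2) (of .b1)) (Set.mem_insert_of_mem _ (Set.mem_insert_of_mem _ (Set.mem_insert_of_mem _ (Set.mem_insert_of_mem _ (Set.mem_insert_of_mem _ (Set.mem_insert_of_mem _ (Set.mem_insert_of_mem _ (Set.mem_insert_of_mem _ (Set.mem_insert_of_mem _ (Set.mem_insert _ _))))))))))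
    simp only [Stmt10.c, _root_.map_mul, _root_.map_inv, hmk] at h
    exact hKtoCommT _ _ h
  have hg11 : α₂ * β₂ = β₂ * α₂ := by
    have h := hrel (c (of .a2) (of .b2)) (Set.mem_insert_of_mem _ (Set.mem_insert_of_mem _ (Set.mem_insert_of_mem _ (Set.mem_insert_of_mem _ (Set.mem_insert_of_mem _ (Set.mem_insert_of_mem _ (Set.mem_insert_of_mem _ (Set.mem_insert_of_mem _ (Set.mem_insert_of_mem _ (Set.mem_insert_of_mem _ (Set.mem_insert _ _)))))))))))
    simp only [Stmt10.c, _root_.map_mul, _root_.map_inv, hmk] at h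
    exact hKtoCommT _ _ h
  have hg12 : α₂ * γ = γ * α₂ := by
    have h := hrel (c (of .a2) (of .g)) (Set.mem_insert_of_mem _ (Set.mem_insert_of_mem _ (Set.mem_insert_of_mem _ (Set.mem_insert_of_mem _ (Set.mem_insert_of_mem _ (Set.mem_insert_of_mem _ (Set.mem_insert_of_mem _ (Set.mem_insert_of_mem _ (Set.mem_insert_of_mem _ (Set.mem_insert_of_mem _ (Set.mem_insert_of_mem _ (Set.mem_insert _ _))))))))))))
    simp only [Stmt10.c, _root_.map_mul, _root_.map_inv, hmk] at h
    exact hKtoCommT _ _ h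
  have hg13 : β₁ * β₂ = β₂ * β₁ := by
    have h := hrel (c (of .b1) (of .b2)) (Set.mem_insert_of_mem _ (Set.mem_insert_of_mem _ (Set.mem_insert_of_mem _ (Set.mem_insert_of_mem _ (Set.mem_insert_of_mem _ (Set.mem_insert_of_mem _ (Set.mem_insert_of_mem _ (Set.mem_insert_of_mem _ (Set.mem_insert_of_mem _ (Set.mem_insert_of_mem _ (Set.mem_insert_of_mem _ (Set.mem_insert_of_mem _ (Set.mem_insert _ _)))))))))))))
    simp only [Stmt10.c, _root_.map_mul, _root_.map_inv, hmk] at h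
    exact hKtoCommT _ _ h
  have hg14 : β₁ * γ = γ * β₁ := by
    have h := hrel (c (of .b1) (of .g)) (Set.mem_insert_of_mem _ (Set.mem_insert_of_mem _ (Set.mem_insert_of_mem _ (Set.mem_insert_of_mem _ (Set.mem_insert_of_mem _ (Set.mem_insert_of_mem _ (Set.mem_insert_of_mem _ (Set.mem_insert_of_mem _ (Set.mem_insert_of_mem _ (Set.mem_insert_of_mem _ (Set.mem_insert_of_mem _ (Set.mem_insert_of_mem _ (Set.mem_insert_of_mem _ (Set.mem_insert _ _))))))))))))))
    simp only [Stmt10.c, _root_.map_mul, _root_.map_inv, hmk] at h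
    exact hKtoCommT _ _ h
  have hg15 : β₂ * γ = γ * β₂ := by
    have h := hrel (c (of .b2) (of .g)) (Set.mem_insert_of_mem _ (Set.mem_insert_of_mem _ (Set.mem_insert_of_mem _ (Set.mem_insert_of_mem _ (Set.mem_insert_of_mem _ (Set.mem_insert_of_mem _ (Set.mem_insert_of_mem _ (Set.mem_insert_of_mem _ (Set.mem_insert_of_mem _ (Set.mem_insert_of_mem _ (Set.mem_insert_of_mem _ (Set.mem_insert_of_mem _ (Set.mem_insert_of_mem _ (Set.mem_insert_of_mem _ (Set.mem_insert _ _)))))))))))))))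
    simp only [Stmt10.c, _root_.map_mul, _root_.map_inv, hmk] at h
    exact hKtoCommT _ _ h
  have hg16 : α ^ p = β₁ := by
    have h := hrel ((of Gen.a) ^ p * (of Gen.b1)⁻¹) (Set.mem_insert_of_mem _ (Set.mem_insert_of_mem _ (Set.mem_insert_of_mem _ (Set.mem_insert_of_mem _ (Set.mem_insert_of_mem _ (Set.mem_insert_of_mem _ (Set.mem_insert_of_mem _ (Set.mem_insert_of_mem _ (Set.mem_insert_of_mem _ (Set.mem_insert_of_mem _ (Set.mem_insert_of_mem _ (Set.mem_insert_of_mem _ (Set.mem_insert_of_mem _ (Set.mem_insert_of_mem _ (Set.mem_insert_of_mem _ (Set.mem_insert _ _))))))))))))))))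
    simp only [_root_.map_mul, _root_.map_inv, _root_.map_pow, hmk] at h
    exact mul_inv_eq_one.mp h
  have hg18 : α₁ ^ p = β₂ := by
    have h := hrel ((of Gen.a1) ^ p * (of Gen.b2)⁻¹) (Set.mem_insert_of_mem _ (Set.mem_insert_of_mem _ (Set.mem_insert_of_mem _ (Set.mem_insert_of_mem _ (Set.mem_insert_of_mem _ (Set.mem_insert_of_mem _ (Set.mem_insert_of_mem _ (Set.mem_insert_of_mem _ (Set.mem_insert_of_mem _ (Set.mem_insert_of_mem _ (Set.mem_insert_of_mem _ (Set.mem_insert_of_mem _ (Set.mem_insert_of_mem _ (Set.mem_insert_of_mem _ (Set.mem_insert_of_mem _ (Set.mem_insert_of_mem _ (Set.mem_insert_of_mem _ (Set.mem_insert _ _))))))))))))))))))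
    simp only [_root_.map_mul, _root_.map_inv, _root_.map_pow, hmk] at h
    exact mul_inv_eq_one.mp h
  have hg19 : α₂ ^ p = 1 := by
    have h := hrel ((of Gen.a2) ^ p) (Set.mem_insert_of_mem _ (Set.mem_insert_of_mem _ (Set.mem_insert_of_mem _ (Set.mem_insert_of_mem _ (Set.mem_insert_of_mem _ (Set.mem_insert_of_mem _ (Set.mem_insert_of_mem _ (Set.mem_insert_of_mem _ (Set.mem_insert_of_mem _ (Set.mem_insert_of_mem _ (Set.mem_insert_of_mem _ (Set.mem_insert_of_mem _ (Set.mem_insert_of_mem _ (Set.mem_insert_of_mem _ (Set.mem_insert_of_mem _ (Set.mem_insert_of_mem _ (Set.mem_insert_of_mem _ (Set.mem_insert_of_mem _ (Set.mem_insert _ _)))))))))))))))))))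
    simp only [_root_.map_pow, hmk] at h
    exact h
  -- raw lifts of the generators
  set Araw : QZ × PresentedGroup (rels p) := ((0 : QZ), α) with hArawdef
  set A1raw : QZ × PresentedGroup (rels p) := ((0 : QZ), α₁) with hA1rawdef
  set A2raw : QZ × PresentedGroup (rels p) := ((0 : QZ), α₂) with hA2rawdef
  have hAraw_snd : Araw.2 = α := rfl
  have hA1raw_snd : A1raw.2 = α₁ := rfl
  have hA2raw_snd : A2raw.2 = α₂ := rfl
  set B1 : QZ × PresentedGroup (rels p) := A1raw⁻¹ * Araw⁻¹ * A1raw * Araw with hB1def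
  set B2 : QZ × PresentedGroup (rels p) := A2raw⁻¹ * Araw⁻¹ * A2raw * Araw with hB2def
  set C : QZ × PresentedGroup (rels p) := B2⁻¹ * Araw⁻¹ * B2 * Araw with hCdef
  have hB1snd : B1.2 = β₁ := by
    rw [hB1def]
    simp only [hsnd_mul, hsnd_inv, hA1raw_snd, hAraw_snd]
    exact hg1
  have hB2snd : B2.2 = β₂ := by
    rw [hB2def]
    simp only [hsnd_mul, hsnd_inv, hA2raw_snd, hAraw_snd]
    exact hg2
  have hCsnd : C.2 = γ := by
    rw [hCdef]
    simp only [hsnd_mul, hsnd_inv, hB2snd, hAraw_snd]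
    exact hg3
  -- tuned lifts
  obtain ⟨wA, hwA⟩ := qz_divisible p hp0 (B1.1 - (Araw ^ p).1)
  set A : QZ × PresentedGroup (rels p) := Z wA * Araw with hAdef
  have hA_snd : A.2 = α := by rw [hAdef, hsnd_mul, hZ_snd, hAraw_snd, one_mul]
  have hApow : A ^ p = B1 := by
    have hsndeq : B1.2 = (Araw ^ p).2 := by
      rw [hsnd_pow, hAraw_snd, hB1snd]
      exact hg16.symm
    calc A ^ p = Z wA ^ p * Araw ^ p := by rw [hAdef]; exact (hZc wA Araw).mul_pow p
    _ = Z (p • wA) * Araw ^ p := by rw [hZ_pow]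
    _ = Z (B1.1 - (Araw ^ p).1) * Araw ^ p := by rw [hwA]
    _ = B1 := (hdiff B1 (Araw ^ p) hsndeq).symm
  obtain ⟨w1, hw1⟩ := qz_divisible p hp0 (B2.1 - (A1raw ^ p).1)
  set A1 : QZ × PresentedGroup (rels p) := Z w1 * A1raw with hA1def
  have hA1_snd : A1.2 = α₁ := by rw [hA1def, hsnd_mul, hZ_snd, hA1raw_snd, one_mul]
  have hA1pow : A1 ^ p = B2 := by
    have hsndeq : B2.2 = (A1raw ^ p).2 := by
      rw [hsnd_pow, hA1raw_snd, hB2snd]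
      exact hg18.symm
    calc A1 ^ p = Z w1 ^ p * A1raw ^ p := by rw [hA1def]; exact (hZc w1 A1raw).mul_pow p
    _ = Z (p • w1) * A1raw ^ p := by rw [hZ_pow]
    _ = Z (B2.1 - (A1raw ^ p).1) * A1raw ^ p := by rw [hw1]
    _ = B2 := (hdiff B2 (A1raw ^ p) hsndeq).symm
  obtain ⟨w2, hw2⟩ := qz_divisible p hp0 (-((A2raw ^ p).1 + f 1 1))
  set A2 : QZ × PresentedGroup (rels p) := Z w2 * A2raw with hA2def
  have hA2_snd : A2.2 = α₂ := by rw [hA2def, hsnd_mul, hZ_snd, hA2raw_snd, one_mul]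
  have hA2pow : A2 ^ p = 1 := by
    have h1 : A2raw ^ p = Z ((A2raw ^ p).1 + f 1 1) :=
      hone_of _ (by rw [hsnd_pow, hA2raw_snd]; exact hg19)
    calc A2 ^ p = Z w2 ^ p * A2raw ^ p := by rw [hA2def]; exact (hZc w2 A2raw).mul_pow p
    _ = Z (p • w2) * A2raw ^ p := by rw [hZ_pow]
    _ = Z (p • w2) * Z ((A2raw ^ p).1 + f 1 1) := congrArg (fun w => Z (p • w2) * w) h1
    _ = Z (p • w2 + ((A2raw ^ p).1 + f 1 1)) := hZ_add _ _
    _ = Z 0 := by rw [hw2, neg_add_cancel]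
    _ = 1 := hZ_zero
  -- the commutator values with the tuned lifts
  have hB1F : A1⁻¹ * A⁻¹ * A1 * A = B1 := by
    rw [hA1def, hAdef, hKinv1, hKinv2]
  have hB2F : A2⁻¹ * A⁻¹ * A2 * A = B2 := by
    rw [hA2def, hAdef, hKinv1, hKinv2]
  have hCF : B2⁻¹ * A⁻¹ * B2 * A = C := by
    rw [hAdef, hKinv2]
  -- commuting lifts from the bicyclic hypothesis
  have hcAB1 : Commute A B1 := L1 α β₁ hg5 A B1 hA_snd hB1snd
  have hcAC : Commute A C := L1 α γ hg6 A C hA_snd hCsnd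
  have hcA1A2 : Commute A1 A2 := L1 α₁ α₂ hg7 A1 A2 hA1_snd hA2_snd
  have hcA1B2 : Commute A1 B2 := L1 α₁ β₂ hg8 A1 B2 hA1_snd hB2snd
  have hcA1C : Commute A1 C := L1 α₁ γ hg9 A1 C hA1_snd hCsnd
  have hcA2B1 : Commute A2 B1 := L1 α₂ β₁ hg10 A2 B1 hA2_snd hB1snd
  have hcA2B2 : Commute A2 B2 := L1 α₂ β₂ hg11 A2 B2 hA2_snd hB2snd
  have hcA2C : Commute A2 C := L1 α₂ γ hg12 A2 C hA2_snd hCsnd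
  have hcB1B2 : Commute B1 B2 := L1 β₁ β₂ hg13 B1 B2 hB1snd hB2snd
  have hcB1C : Commute B1 C := L1 β₁ γ hg14 B1 C hB1snd hCsnd
  have hcB2C : Commute B2 C := L1 β₂ γ hg15 B2 C hB2snd hCsnd
  -- the central computation
  have hconjA1 : A⁻¹ * A1 * A = A1 * B1 := by rw [← hB1F]; group
  have hconjpow := conj_transport hconjA1 hcAB1
  have hu : A1⁻¹ * B1⁻¹ * A1 * B1 = B1 ^ p := by
    have h := hconjpow p
    rw [hApow] at h
    calc A1⁻¹ * B1⁻¹ * A1 * B1 = A1⁻¹ * (B1⁻¹ * A1 * B1) := by group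
    _ = A1⁻¹ * (A1 * B1 ^ p) := by rw [h]
    _ = B1 ^ p := by group
  set u : QZ × PresentedGroup (rels p) := B1 ^ p with hudef
  have husnd : u.2 = γ := by
    have h1 : (A1⁻¹ * B1⁻¹ * A1 * B1).2 = γ := by
      simp only [hsnd_mul, hsnd_inv, hA1_snd, hB1snd]
      exact hg4
    rw [hu] at h1
    exact h1
  have hcA1u : Commute A1 u := by
    have hd : u = Z (u.1 - C.1) * C := hdiff u C (by rw [husnd, hCsnd])
    rw [hd]
    exact Commute.mul_right (hZc _ _).symm hcA1C
  have hcB1u : Commute B1 u := (Commute.refl B1).pow_right p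
  have hconjB1 : B1⁻¹ * A1 * B1 = A1 * u := by
    have h := hconjpow p
    rw [hApow] at h
    exact h
  have hupow : u ^ p = 1 := by
    have h := conj_transport hconjB1 hcB1u p
    rw [← hudef] at h
    have h2 : u⁻¹ * A1 * u = A1 := by
      rw [mul_assoc, hcA1u.eq, inv_mul_cancel_left]
    rw [h2] at h
    have h3 : A1 * 1 = A1 * u ^ p := by rw [mul_one]; exact h
    exact (mul_left_cancel h3).symm
  have hB1A1 : B1 * A1 = A1 * B1 * u⁻¹ := by
    have h2 : B1 * (A1 * u) = A1 * B1 := by rw [← hconjB1]; group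
    calc B1 * A1 = B1 * (A1 * u) * u⁻¹ := by group
    _ = A1 * B1 * u⁻¹ := by rw [h2]
  have hprodpow := prod_pow_comm hB1A1 hcA1u.inv_right hcB1u.inv_right p
  have hchoose : u⁻¹ ^ (p.choose 2) = 1 := by
    have hdvd : p ∣ Nat.choose p 2 := hp.dvd_choose_self (by norm_num) (by omega)
    obtain ⟨t2, ht2⟩ := hdvd
    rw [ht2, pow_mul, inv_pow, hupow, inv_one, one_pow]
  have hB2conjA : A⁻¹ * B2 * A = B2 * u := by
    have h0 : (A⁻¹ * A1 * A) ^ p = A⁻¹ * A1 ^ p * A := by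
      have h := conj_pow (a := A⁻¹) (b := A1) (i := p)
      rwa [inv_inv] at h
    calc A⁻¹ * B2 * A = A⁻¹ * A1 ^ p * A := by rw [hA1pow]
    _ = (A⁻¹ * A1 * A) ^ p := h0.symm
    _ = (A1 * B1) ^ p := by rw [hconjA1]
    _ = A1 ^ p * B1 ^ p * u⁻¹ ^ (p.choose 2) := hprodpow
    _ = B2 * u := by rw [hA1pow, ← hudef, hchoose, mul_one]
  have hCu : C = u := by
    rw [← hCF]
    calc B2⁻¹ * A⁻¹ * B2 * A = B2⁻¹ * (A⁻¹ * B2 * A) := by group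
    _ = B2⁻¹ * (B2 * u) := by rw [hB2conjA]
    _ = u := by group
  have hKA1B1C : A1⁻¹ * B1⁻¹ * A1 * B1 = C := by rw [hCu]; exact hu
  have hB1powC : B1 ^ p = C := by rw [hCu]
  have hCpow : C ^ p = 1 := by rw [hCu]; exact hupow
  have hB2pow : B2 ^ p = 1 := by
    have hconjA2 : A⁻¹ * A2 * A = A2 * B2 := by rw [← hB2F]; group
    have h0 : (A⁻¹ * A2 * A) ^ p = A⁻¹ * A2 ^ p * A := by
      have h := conj_pow (a := A⁻¹) (b := A2) (i := p)
      rwa [inv_inv] at h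
    have h1 : A⁻¹ * A2 ^ p * A = A2 ^ p * B2 ^ p := by
      rw [← h0, hconjA2]
      exact hcA2B2.mul_pow p
    rw [hA2pow] at h1
    rw [mul_one, inv_mul_cancel, one_mul] at h1
    exact h1.symm
  -- von Dyck: define the splitting homomorphism
  set F : Gen → QZ × PresentedGroup (rels p) := fun x =>
    match x with
    | Gen.a => A
    | Gen.a1 => A1
    | Gen.a2 => A2
    | Gen.b1 => B1
    | Gen.b2 => B2
    | Gen.g => C
    with hFdef
  have hFa : F Gen.a = A := rfl
  have hFa1 : F Gen.a1 = A1 := rfl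
  have hFa2 : F Gen.a2 = A2 := rfl
  have hFb1 : F Gen.b1 = B1 := rfl
  have hFb2 : F Gen.b2 = B2 := rfl
  have hFg : F Gen.g = C := rfl
  have hlift : ∀ r ∈ rels p, FreeGroup.lift F r = 1 := by
    intro r hr
    simp only [rels, Set.mem_insert_iff, Set.mem_singleton_iff] at hr
    rcases hr with rfl|rfl|rfl|rfl|rfl|rfl|rfl|rfl|rfl|rfl|rfl|rfl|rfl|rfl|rfl|rfl|rfl|rfl|rfl|rfl|rfl
    · simp only [Stmt10.c, _root_.map_mul, _root_.map_inv, FreeGroup.lift_apply_of, hFa, hFa1, hFb1]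
      rw [hB1F, mul_inv_cancel]
    · simp only [Stmt10.c, _root_.map_mul, _root_.map_inv, FreeGroup.lift_apply_of, hFa, hFa2, hFb2]
      rw [hB2F, mul_inv_cancel]
    · simp only [Stmt10.c, _root_.map_mul, _root_.map_inv, FreeGroup.lift_apply_of, hFa, hFb2, hFg]
      rw [hCF, mul_inv_cancel]
    · simp only [Stmt10.c, _root_.map_mul, _root_.map_inv, FreeGroup.lift_apply_of, hFa1, hFb1, hFg]
      rw [hKA1B1C, mul_inv_cancel]
    · simp only [Stmt10.c, _root_.map_mul, _root_.map_inv, FreeGroup.lift_apply_of, hFa, hFb1]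
      exact hCommtoKE _ _ hcAB1
    · simp only [Stmt10.c, _root_.map_mul, _root_.map_inv, FreeGroup.lift_apply_of, hFa, hFg]
      exact hCommtoKE _ _ hcAC
    · simp only [Stmt10.c, _root_.map_mul, _root_.map_inv, FreeGroup.lift_apply_of, hFa1, hFa2]
      exact hCommtoKE _ _ hcA1A2
    · simp only [Stmt10.c, _root_.map_mul, _root_.map_inv, FreeGroup.lift_apply_of, hFa1, hFb2]
      exact hCommtoKE _ _ hcA1B2
    · simp only [Stmt10.c, _root_.map_mul, _root_.map_inv, FreeGroup.lift_apply_of, hFa1, hFg]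
      exact hCommtoKE _ _ hcA1C
    · simp only [Stmt10.c, _root_.map_mul, _root_.map_inv, FreeGroup.lift_apply_of, hFa2, hFb1]
      exact hCommtoKE _ _ hcA2B1
    · simp only [Stmt10.c, _root_.map_mul, _root_.map_inv, FreeGroup.lift_apply_of, hFa2, hFb2]
      exact hCommtoKE _ _ hcA2B2
    · simp only [Stmt10.c, _root_.map_mul, _root_.map_inv, FreeGroup.lift_apply_of, hFa2, hFg]
      exact hCommtoKE _ _ hcA2C
    · simp only [Stmt10.c, _root_.map_mul, _root_.map_inv, FreeGroup.lift_apply_of, hFb1, hFb2]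
      exact hCommtoKE _ _ hcB1B2
    · simp only [Stmt10.c, _root_.map_mul, _root_.map_inv, FreeGroup.lift_apply_of, hFb1, hFg]
      exact hCommtoKE _ _ hcB1C
    · simp only [Stmt10.c, _root_.map_mul, _root_.map_inv, FreeGroup.lift_apply_of, hFb2, hFg]
      exact hCommtoKE _ _ hcB2C
    · simp only [_root_.map_mul, _root_.map_inv, _root_.map_pow, FreeGroup.lift_apply_of, hFa, hFb1]
      rw [hApow, mul_inv_cancel]
    · simp only [_root_.map_mul, _root_.map_inv, _root_.map_pow, FreeGroup.lift_apply_of, hFb1, hFg]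
      rw [hB1powC, mul_inv_cancel]
    · simp only [_root_.map_mul, _root_.map_inv, _root_.map_pow, FreeGroup.lift_apply_of, hFa1, hFb2]
      rw [hA1pow, mul_inv_cancel]
    · simp only [_root_.map_pow, FreeGroup.lift_apply_of, hFa2]
      exact hA2pow
    · simp only [_root_.map_pow, FreeGroup.lift_apply_of, hFb2]
      exact hB2pow
    · simp only [_root_.map_pow, FreeGroup.lift_apply_of, hFg]
      exact hCpow
  set φ := PresentedGroup.toGroup hlift with hφdef
  have hφof : ∀ x : Gen, φ (PresentedGroup.of x) = F x :=
    fun x => PresentedGroup.toGroup.of hlift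
  set πh : (QZ × PresentedGroup (rels p)) →* PresentedGroup (rels p) :=
    MonoidHom.mk' (fun x => x.2) (fun a b => rfl) with hπdef
  have hsec : ∀ g : PresentedGroup (rels p), (φ g).2 = g := by
    have h : πh.comp φ = MonoidHom.id (PresentedGroup (rels p)) := by
      apply PresentedGroup.ext
      intro x
      rw [MonoidHom.comp_apply, MonoidHom.id_apply, hφof]
      cases x
      · exact hA_snd
      · exact hA1_snd
      · exact hA2_snd
      · exact hB1snd
      · exact hB2snd
      · exact hCsnd
    intro g
    exact DFunLike.congr_fun h g
  refine ⟨fun g => -(φ g).1, ?_⟩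
  intro g h
  show f g h = -(φ h).1 - -(φ (g * h)).1 + -(φ g).1
  have hm : (φ (g * h)).1 = (φ g).1 + (φ h).1 + f (φ g).2 (φ h).2 := by
    rw [map_mul φ g h, hmul]
  rw [hsec g, hsec h] at hm
  rw [hm]
  abel

end Stmt10
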